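/- Lemma 8.11 (vanishing identity C): fix distinct constants a, b (for u^{1(α)}, u^{1(β)}), constants p = m_β ε_β, M = m_α ε_α, and variables u^2, u^3, ... with u^2 ≠ 0. Define G^1 = p/(a−b), G^{k+1} = −(1/(a−b))·Σ_{s=2}^{k+1} G^{k-s+2}·u^s; define D^2 = −M/u^2 and D^{n} for n ≥ 3 by the single-block recursion D^n = F^{n-2} − D^2·u^n/u^2 − (1/u^2)·Σ_{l=1}^{n-3}(D^{l+2} − F^l)·u^{n-l}, where F^t := −G^t (the diagonal Christoffel symbols Γ^{t(α)}_{1(α)1(α)} in the two-block case). Then for every s ≥ 0: Σ_{l=2}^{s+1} (D^{s-l+4} − F^{s-l+2})·G^l + D^2·G^{s+2} + G^{s+1}·(M/(a−b)) = 0. -/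

import Mathlib

/-- **Lemma 8.11, vanishing identity `C`.** With distinct constants
`a, b` (the eigenvalues `u^{1(α)}, u^{1(β)}`), constants `p = m_β ε_β`, `M = m_α ε_α`,
the recursively defined `G^k = Γ^{k(α)}_{1(β)1(α)}`, `F^t = Γ^{t(α)}_{1(α)1(α)} = −G^t`
(two-block case) and `D^n = Γ^{n(α)}_{2(α)2(α)}` given by the single-block recursion,
and `H = Γ^{1(β)}_{1(α)1(β)}` with the sign convention `H = −M/(a−b)`, one has
`Σ_{l=2}^{s+1} (D^{s−l+4} − F^{s−l+2}) G^l + D^2 G^{s+2} + G^{s+1} · H = 0`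
for every `s ≥ 0` (the sum is empty for `s = 0`). -/
theorem statement11 (a b p M : ℝ) (hab : a ≠ b)
    (u : ℕ → ℝ) (hu : u 2 ≠ 0)
    (G F D : ℕ → ℝ) (H : ℝ)
    (hG1 : G 1 = p / (a - b))
    (hGrec : ∀ k : ℕ, 1 ≤ k →
      G (k + 1) = -(1 / (a - b)) * ∑ s ∈ Finset.Icc 2 (k + 1), G (k + 2 - s) * u s)
    (hF : ∀ t : ℕ, F t = -G t)
    (hD2 : D 2 = -M / u 2)
    (hDrec : ∀ n : ℕ, 3 ≤ n →
      D n = F (n - 2) - D 2 * u n / u 2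
        - (1 / u 2) * ∑ l ∈ Finset.Icc 1 (n - 3), (D (l + 2) - F l) * u (n - l))
    (hH : H = -M / (a - b)) :
    ∀ s : ℕ,
      (∑ l ∈ Finset.Icc 2 (s + 1), (D (s + 4 - l) - F (s + 2 - l)) * G l)
        + D 2 * G (s + 2) + G (s + 1) * H = 0 := by
  have hab' : a - b ≠ 0 := sub_ne_zero.mpr hab
  -- the convolution kernel
  set E : ℕ → ℝ := fun l => if l = 0 then D 2 else D (l + 2) - F l with hE
  have hE0 : E 0 = D 2 := rfl
  have hEpos : ∀ l : ℕ, 1 ≤ l → E l = D (l + 2) - F l := by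
    intro l hl
    simp [hE, Nat.one_le_iff_ne_zero.mp hl]
  -- Step A : convolution identity for E
  have convE : ∀ m : ℕ, 1 ≤ m →
      ∑ l ∈ Finset.range (m + 1), E l * u (m + 2 - l) = 0 := by
    intro m hm
    have hd := hDrec (m + 2) (by omega)
    have h2 : (m + 2) - 2 = m := by omega
    have h3 : (m + 2) - 3 = m - 1 := by omega
    rw [h2, h3] at hd
    -- rewrite the Icc sum in hd as a range sum
    have hsum : ∑ l ∈ Finset.Icc 1 (m - 1), (D (l + 2) - F l) * u (m + 2 - l)
        = ∑ l ∈ Finset.Icc 1 (m - 1), E l * u (m + 2 - l) := by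
      apply Finset.sum_congr rfl
      intro l hl
      rw [hEpos l (Finset.mem_Icc.mp hl).1]
    have hd' : u 2 * (D (m + 2) - F m) =
        - (D 2 * u (m + 2)) - ∑ l ∈ Finset.Icc 1 (m - 1), E l * u (m + 2 - l) := by
      rw [← hsum]
      have : ∀ l, u (m + 2 - l) = u (m + 2 - l) := fun _ => rfl
      field_simp at hd ⊢
      linarith [hd]
    -- split range (m+1) = {0} ∪ Icc 1 (m-1) ∪ {m}
    have hrange : Finset.range (m + 1) = insert 0 (Finset.Icc 1 m) := by
      ext x
      simp [Finset.mem_range, Finset.mem_Icc, Finset.mem_insert]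
      omega
    have hIcc : Finset.Icc 1 m = insert m (Finset.Icc 1 (m - 1)) := by
      ext x
      simp [Finset.mem_Icc, Finset.mem_insert]
      omega
    rw [hrange, Finset.sum_insert (by simp), hIcc,
      Finset.sum_insert (by simp [Finset.mem_Icc]; omega)]
    have hEm : E m = D (m + 2) - F m := hEpos m hm
    have humm : m + 2 - m = 2 := by omega
    rw [hE0, hEm, humm]
    simp only [Nat.sub_zero]
    linarith [hd']
  -- Step B : the G recursion, reindexed
  have hGval : ∀ k : ℕ, 1 ≤ k →
      G (k + 1) = -(1 / (a - b)) * ∑ j ∈ Finset.Icc 1 k, G j * u (k + 2 - j) := by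
    intro k hk
    rw [hGrec k hk]
    congr 1
    apply Finset.sum_nbij' (fun s => k + 2 - s) (fun j => k + 2 - j)
    · intro s hs
      simp only [Finset.mem_Icc] at hs ⊢
      omega
    · intro j hj
      simp only [Finset.mem_Icc] at hj ⊢
      omega
    · intro s hs
      simp only [Finset.mem_Icc] at hs
      omega
    · intro j hj
      simp only [Finset.mem_Icc] at hj
      omega
    · intro s hs
      simp only [Finset.mem_Icc] at hs
      have : k + 2 - (k + 2 - s) = s := by omega
      rw [this]
  intro s
  -- rewrite the main sum via E
  have step1 : (∑ l ∈ Finset.Icc 2 (s + 1), (D (s + 4 - l) - F (s + 2 - l)) * G l)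
      + D 2 * G (s + 2)
      = ∑ j ∈ Finset.range (s + 1), E j * G (s + 2 - j) := by
    have hrange : Finset.range (s + 1) = insert 0 (Finset.Icc 1 s) := by
      ext x
      simp [Finset.mem_range, Finset.mem_Icc, Finset.mem_insert]
      omega
    rw [hrange, Finset.sum_insert (by simp)]
    have h0 : E 0 * G (s + 2 - 0) = D 2 * G (s + 2) := by
      rw [hE0]; norm_num
    rw [h0]
    have hre : ∑ l ∈ Finset.Icc 2 (s + 1), (D (s + 4 - l) - F (s + 2 - l)) * G l
        = ∑ j ∈ Finset.Icc 1 s, E j * G (s + 2 - j) := by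
      apply Finset.sum_nbij' (fun l => s + 2 - l) (fun j => s + 2 - j)
      · intro l hl; simp only [Finset.mem_Icc] at hl ⊢; omega
      · intro j hj; simp only [Finset.mem_Icc] at hj ⊢; omega
      · intro l hl; simp only [Finset.mem_Icc] at hl; omega
      · intro j hj; simp only [Finset.mem_Icc] at hj; omega
      · intro l hl
        simp only [Finset.mem_Icc] at hl
        rw [hEpos (s + 2 - l) (by omega)]
        have e1 : s + 2 - l + 2 = s + 4 - l := by omega
        have e2 : s + 2 - (s + 2 - l) = l := by omega
        rw [e1, e2]
    rw [hre]
    ring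
  rw [step1]
  -- expand each G (s+2-j) via the G recursion
  have step2 : ∑ j ∈ Finset.range (s + 1), E j * G (s + 2 - j)
      = -(1 / (a - b)) * ∑ j ∈ Finset.range (s + 1),
          ∑ i ∈ Finset.Icc 1 (s + 1 - j), E j * (G i * u (s + 3 - j - i)) := by
    rw [Finset.mul_sum]
    apply Finset.sum_congr rfl
    intro j hj
    have hjs : j ≤ s := by simpa [Nat.lt_succ_iff] using Finset.mem_range.mp hj
    have hk : 1 ≤ s + 1 - j := by omega
    have hG' := hGval (s + 1 - j) hk
    have e1 : s + 1 - j + 1 = s + 2 - j := by omega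
    rw [e1] at hG'
    have hfix : ∑ i ∈ Finset.Icc 1 (s + 1 - j), G i * u (s + 1 - j + 2 - i)
        = ∑ i ∈ Finset.Icc 1 (s + 1 - j), G i * u (s + 3 - j - i) := by
      apply Finset.sum_congr rfl
      intro i hi
      have e2 : s + 1 - j + 2 - i = s + 3 - j - i := by omega
      rw [e2]
    rw [hfix] at hG'
    rw [hG']
    simp only [Finset.mul_sum]
    apply Finset.sum_congr rfl
    intro i hi
    ring
  rw [step2]
  -- swap the double sum
  have step3 : ∑ j ∈ Finset.range (s + 1),
          ∑ i ∈ Finset.Icc 1 (s + 1 - j), E j * (G i * u (s + 3 - j - i))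
      = ∑ i ∈ Finset.Icc 1 (s + 1),
          ∑ j ∈ Finset.range (s + 2 - i), E j * (G i * u (s + 3 - j - i)) := by
    apply Finset.sum_comm'
    intro x y
    simp only [Finset.mem_range, Finset.mem_Icc]
    omega
  rw [step3]
  -- evaluate the inner sums: zero except at i = s + 1
  have step4 : ∑ i ∈ Finset.Icc 1 (s + 1),
          ∑ j ∈ Finset.range (s + 2 - i), E j * (G i * u (s + 3 - j - i))
      = G (s + 1) * (-M) := by
    have hIcc : Finset.Icc 1 (s + 1) = insert (s + 1) (Finset.Icc 1 s) := by
      ext x; simp [Finset.mem_Icc, Finset.mem_insert]; omega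
    rw [hIcc, Finset.sum_insert (by simp [Finset.mem_Icc])]
    have htop : ∑ j ∈ Finset.range (s + 2 - (s + 1)),
        E j * (G (s + 1) * u (s + 3 - j - (s + 1))) = G (s + 1) * (-M) := by
      have e : s + 2 - (s + 1) = 1 := by omega
      rw [e, Finset.sum_range_one, hE0, hD2]
      have e2 : s + 3 - 0 - (s + 1) = 2 := by omega
      rw [e2]
      field_simp
    rw [htop]
    have hzero : ∑ i ∈ Finset.Icc 1 s,
        ∑ j ∈ Finset.range (s + 2 - i), E j * (G i * u (s + 3 - j - i)) = 0 := by
      apply Finset.sum_eq_zero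
      intro i hi
      have hi' := Finset.mem_Icc.mp hi
      have hm : 1 ≤ s + 1 - i := by omega
      have key := convE (s + 1 - i) hm
      have e : s + 2 - i = (s + 1 - i) + 1 := by omega
      rw [e]
      have : ∑ j ∈ Finset.range ((s + 1 - i) + 1), E j * (G i * u (s + 3 - j - i))
          = G i * ∑ j ∈ Finset.range ((s + 1 - i) + 1), E j * u ((s + 1 - i) + 2 - j) := by
        rw [Finset.mul_sum]
        apply Finset.sum_congr rfl
        intro j hj
        have hj' : j ≤ s + 1 - i := by simpa [Nat.lt_succ_iff] using Finset.mem_range.mp hj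
        have e3 : s + 1 - i + 2 - j = s + 3 - j - i := by omega
        rw [e3]
        ring
      rw [this, key, mul_zero]
    rw [hzero]
    ring
  rw [step4, hH]
  field_simp
  ring
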